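/- Let p(z) = Σ_{k=-r}^n a_k z^k be a Laurent polynomial with complex coefficients where n, r ∈ ℕ, a_{-r} ≠ 0 and a_n ≠ 0. If all zeros of p lie on the unit circle, then there exists θ ∈ ℝ such that a_k = e^{iθ} · conj(a_{n-r-k}) for all −r ≤ k ≤ n. -/

import Mathlib

open Polynomial Complex

noncomputable section

lemma rev_X_sub_C (z : ℂ) : (X - C z).reverse = 1 - C z * X := by
  have h1 : (X - C z).natDegree = 1 := natDegree_X_sub_C z
  unfold Polynomial.reverse
  rw [h1, reflect_sub]
  have h2 : reflect 1 (X : ℂ[X]) = 1 := by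
    rw [← pow_one (X : ℂ[X]), reflect_monomial]; simp [revAt_le]
  have h0 : reflect 1 (1 : ℂ[X]) = X := by
    rw [← pow_zero (X : ℂ[X]), reflect_monomial]; simp
  have h3 : reflect 1 (C z : ℂ[X]) = C z * X := by
    rw [← mul_one (C z), reflect_C_mul, h0, mul_one]
  rw [h2, h3]

lemma reverse_multiset_prod (s : Multiset ℂ[X]) :
    s.prod.reverse = (s.map Polynomial.reverse).prod := by
  induction s using Multiset.induction with
  | empty => simp [Polynomial.reverse]
  | cons p s ih => simp [reverse_mul_of_domain, ih]

/-- A complex polynomial whose roots all lie on the unit circle is self-inversive. -/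
lemma self_inversive (P : ℂ[X]) (h0 : P.coeff 0 ≠ 0)
    (hroots : ∀ z ∈ P.roots, ‖z‖ = 1) :
    ∃ μ : ℂ, (P.map (starRingEnd ℂ)).reverse = C μ * P := by
  have hP : P ≠ 0 := fun h => h0 (by simp [h])
  have hc : P.leadingCoeff ≠ 0 := leadingCoeff_ne_zero.mpr hP
  have hsplit : P.Splits := IsAlgClosed.splits P
  have hprod := hsplit.eq_prod_roots
  set c := P.leadingCoeff with hcdef
  set s := P.roots with hsdef
  -- map conj
  have hmap : P.map (starRingEnd ℂ)
      = C ((starRingEnd ℂ) c) * (s.map fun z => X - C ((starRingEnd ℂ) z)).prod := by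
    conv_lhs => rw [hprod]
    rw [Polynomial.map_mul, map_C, Polynomial.map_multiset_prod, Multiset.map_map]
    congr 2
    apply Multiset.map_congr rfl
    intro z _
    simp [Polynomial.map_sub]
  -- reverse
  have hrev : (P.map (starRingEnd ℂ)).reverse
      = C ((starRingEnd ℂ) c) * (s.map fun z => 1 - C ((starRingEnd ℂ) z) * X).prod := by
    rw [hmap, reverse_mul_of_domain, reverse_C, reverse_multiset_prod, Multiset.map_map]
    congr 2
    apply Multiset.map_congr rfl
    intro z _
    exact rev_X_sub_C _
  -- each factor equals C (-conj z) * (X - C z)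
  have hfac : (s.map fun z => 1 - C ((starRingEnd ℂ) z) * X).prod
      = (s.map fun z => C (-(starRingEnd ℂ) z) * (X - C z)).prod := by
    congr 1
    apply Multiset.map_congr rfl
    intro z hz
    have h1 : (starRingEnd ℂ) z * z = 1 := by
      rw [mul_comm, Complex.mul_conj]
      norm_cast
      rw [Complex.normSq_eq_norm_sq, hroots z hz]; norm_num
    rw [map_neg, neg_mul, mul_sub, ← C_mul, h1, C_1]
    ring
  set w : ℂ := (s.map fun z => -(starRingEnd ℂ) z).prod with hw
  set M : ℂ[X] := (s.map fun z => X - C z).prod with hM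
  refine ⟨(starRingEnd ℂ) c * w * c⁻¹, ?_⟩
  rw [hrev, hfac, Multiset.prod_map_mul]
  have hCw : ((s.map fun z => C (-(starRingEnd ℂ) z)).prod : ℂ[X]) = C w := by
    rw [hw, map_multiset_prod (C : ℂ →+* ℂ[X]), Multiset.map_map]; rfl
  conv_rhs => rw [hprod]
  rw [hCw]
  have hc' : (starRingEnd ℂ) c * w * c⁻¹ * c = (starRingEnd ℂ) c * w := by field_simp
  calc C ((starRingEnd ℂ) c) * (C w * M) = C ((starRingEnd ℂ) c * w) * M := by
        rw [C_mul]; ring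
    _ = C ((starRingEnd ℂ) c * w * c⁻¹ * c) * M := by rw [hc']
    _ = C ((starRingEnd ℂ) c * w * c⁻¹) * (C c * M) := by rw [C_mul]; ring

/-- If all zeros of the Laurent polynomial `p(z) = ∑_{k=-r}^n a_k z^k` (with `a_{-r} ≠ 0`,
`a_n ≠ 0`) lie on the unit circle, then there is `θ ∈ ℝ` with
`a_k = e^{iθ} · conj (a_{n-r-k})` for all `-r ≤ k ≤ n`. -/
theorem laurent_zeros_on_unit_circle_coeff_symmetry
    (n r : ℕ) (a : ℤ → ℂ) (har : a (-(r : ℤ)) ≠ 0) (han : a (n : ℤ) ≠ 0)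
    (hzeros : ∀ z : ℂ, z ≠ 0 →
      (∑ k ∈ Finset.Icc (-(r : ℤ)) (n : ℤ), a k * z ^ k) = 0 → ‖z‖ = 1) :
    ∃ θ : ℝ, ∀ k : ℤ, -(r : ℤ) ≤ k → k ≤ (n : ℤ) →
      a k = Complex.exp (θ * Complex.I) * (starRingEnd ℂ) (a ((n : ℤ) - (r : ℤ) - k)) := by
  classical
  set d : ℕ := n + r with hd
  set P : ℂ[X] := ∑ j ∈ Finset.range (d + 1), C (a ((j : ℤ) - r)) * X ^ j with hPdef
  have hcoeff : ∀ m : ℕ, m ≤ d → P.coeff m = a ((m : ℤ) - r) := by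
    intro m hm
    rw [hPdef, finset_sum_coeff]
    simp only [coeff_C_mul, coeff_X_pow]
    rw [Finset.sum_eq_single m]
    · simp
    · intro b _ hb; simp [Ne.symm hb]
    · intro h; exact absurd (Finset.mem_range.mpr (Nat.lt_succ_of_le hm)) h
  have hcoeff' : ∀ m : ℕ, d < m → P.coeff m = 0 := by
    intro m hm
    rw [hPdef, finset_sum_coeff]
    apply Finset.sum_eq_zero
    intro b hb
    simp only [Finset.mem_range] at hb
    have : b ≠ m := by omega
    simp [coeff_C_mul, coeff_X_pow, Ne.symm this]
  have h0 : P.coeff 0 = a (-(r : ℤ)) := by rw [hcoeff 0 (Nat.zero_le d)]; norm_num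
  have hdc : P.coeff d = a (n : ℤ) := by
    rw [hcoeff d le_rfl]; congr 1; push_cast [hd]; ring
  have hP0 : P.coeff 0 ≠ 0 := by rw [h0]; exact har
  have hPne : P ≠ 0 := fun h => hP0 (by simp [h])
  have hdeg : P.natDegree = d := by
    apply le_antisymm
    · exact natDegree_le_iff_coeff_eq_zero.mpr fun m hm => hcoeff' m hm
    · exact le_natDegree_of_ne_zero (by rw [hdc]; exact han)
  -- evaluation
  have heval : ∀ z : ℂ, z ≠ 0 →
      P.eval z = z ^ r * ∑ k ∈ Finset.Icc (-(r : ℤ)) (n : ℤ), a k * z ^ k := by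
    intro z hz
    have h1 : P.eval z = ∑ j ∈ Finset.range (d + 1), a ((j : ℤ) - r) * z ^ j := by
      rw [hPdef, eval_finset_sum]; simp
    rw [h1, Finset.mul_sum]
    refine Finset.sum_nbij' (fun j => (j : ℤ) - r) (fun k => (k + r).toNat) ?_ ?_ ?_ ?_ ?_
    · intro j hj
      simp only [Finset.mem_range] at hj
      simp only [Finset.mem_Icc]
      omega
    · intro k hk
      simp only [Finset.mem_Icc] at hk
      simp only [Finset.mem_range]
      omega
    · intro j hj; simp only [Finset.mem_range] at hj; omega
    · intro k hk; simp only [Finset.mem_Icc] at hk; omega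
    · intro j hj
      simp only [Finset.mem_range] at hj
      rw [mul_comm (z ^ r), mul_assoc]
      congr 1
      rw [← zpow_natCast z r, ← zpow_natCast z j, ← zpow_add₀ hz]
      congr 1
      omega
  -- roots on circle
  have hroots : ∀ z ∈ P.roots, ‖z‖ = 1 := by
    intro z hzr
    have hz0 : z ≠ 0 := by
      rintro rfl
      have := (mem_roots hPne).mp hzr
      rw [IsRoot, ← coeff_zero_eq_eval_zero] at this
      exact hP0 this
    have hev : P.eval z = 0 := (mem_roots hPne).mp hzr
    rw [heval z hz0] at hev
    rcases mul_eq_zero.mp hev with h | h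
    · exact absurd h (pow_ne_zero _ hz0)
    · exact hzeros z hz0 h
  obtain ⟨μ, hμ⟩ := self_inversive P hP0 hroots
  have hrel : ∀ m : ℕ, m ≤ d →
      (starRingEnd ℂ) (P.coeff (d - m)) = μ * P.coeff m := by
    intro m hm
    have h1 := congrArg (fun q => Polynomial.coeff q m) hμ
    simp only [coeff_C_mul] at h1
    rwa [coeff_reverse, natDegree_map, hdeg, revAt_le hm, coeff_map] at h1
  -- |μ| = 1
  have habs : ‖μ‖ = 1 := by
    have e1 := hrel 0 (Nat.zero_le d)
    have e2 := hrel d le_rfl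
    rw [Nat.sub_zero, hdc, h0] at e1
    rw [Nat.sub_self, h0, hdc] at e2
    have a1 := congrArg (fun x : ℂ => ‖x‖) e1
    have a2 := congrArg (fun x : ℂ => ‖x‖) e2
    rw [norm_mul, Complex.norm_conj] at a1 a2
    have hn' : ‖a (n : ℤ)‖ ≠ 0 := by simpa using han
    have hr' : ‖a (-(r : ℤ))‖ ≠ 0 := by simpa using har
    have h1 : ‖a (n:ℤ)‖ = ‖μ‖ * ‖a (-(r:ℤ))‖ := a1
    have h2 : ‖a (-(r:ℤ))‖ = ‖μ‖ * ‖a (n:ℤ)‖ := a2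
    have hpos : 0 < ‖a (n:ℤ)‖ := lt_of_le_of_ne (norm_nonneg _) (Ne.symm hn')
    have h4 : (‖μ‖ * ‖μ‖) * ‖a (n:ℤ)‖
        = 1 * ‖a (n:ℤ)‖ := by
      rw [one_mul]
      calc (‖μ‖ * ‖μ‖) * ‖a (n:ℤ)‖
          = ‖μ‖ * ‖a (-(r:ℤ))‖ := by rw [h2]; ring
        _ = ‖a (n:ℤ)‖ := h1.symm
    have ht : ‖μ‖ * ‖μ‖ = 1 := mul_right_cancel₀ hpos.ne' h4
    rcases mul_self_eq_one_iff.mp ht with h | h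
    · exact h
    · exfalso; have := norm_nonneg μ; linarith
  have hμne : μ ≠ 0 := by intro h; rw [h] at habs; simp at habs
  refine ⟨(μ⁻¹).arg, ?_⟩
  have hexp : Complex.exp ((μ⁻¹).arg * Complex.I) = μ⁻¹ := by
    have := Complex.norm_mul_exp_arg_mul_I μ⁻¹
    rwa [norm_inv, habs, inv_one, Complex.ofReal_one, one_mul] at this
  intro k hk1 hk2
  set m : ℕ := (k + r).toNat with hm
  have hmle : m ≤ d := by omega
  have hmk : (m : ℤ) = k + r := by omega
  have hc1 : P.coeff m = a k := by rw [hcoeff m hmle]; congr 1; omega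
  have hc2 : P.coeff (d - m) = a ((n : ℤ) - r - k) := by
    rw [hcoeff (d - m) (Nat.sub_le d m)]; congr 1; omega
  have := hrel m hmle
  rw [hc1, hc2] at this
  rw [hexp]
  field_simp
  rw [mul_comm]
  exact this.symm
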